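/- Let μ, α ∈ ℝ and F_L(α) := (cosh(2α))^(−1/2) • ![![1, sinh(2α)], ![0, cosh(2α)]] (a 2×2 real matrix). Define σ_A := μ • (F_L(α)·F_L(α)ᵀ − 1). Then σ_A = ![![μ·(cosh(2α) − 1), μ·sinh(2α)], ![μ·sinh(2α), μ·(cosh(2α) − 1)]]. Moreover, if μ > 0 and α > 0, then the diagonal entries of σ_A are strictly positive; hence σ_A is not a pure shear stress. -/

import Mathlib

open Matrix Real

/-- Eq. (4-21): for the Ogden-A (neo-Hookean / Simo–Pister) model under LFSS
deformation, the Cauchy stress `σ_A = μ(c − I)` has strictly positive diagonal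
entries when `μ > 0` and `α > 0`; hence it is not a pure shear stress. -/
theorem ogden_A_lfss_not_pure_shear (μ α : ℝ) :
    let F_L : Matrix (Fin 2) (Fin 2) ℝ :=
      (Real.sqrt (Real.cosh (2*α)))⁻¹ • !![1, Real.sinh (2*α); 0, Real.cosh (2*α)]
    let σ_A : Matrix (Fin 2) (Fin 2) ℝ := μ • (F_L * F_Lᵀ - 1)
    σ_A = !![μ * (Real.cosh (2*α) - 1), μ * Real.sinh (2*α);
             μ * Real.sinh (2*α), μ * (Real.cosh (2*α) - 1)] ∧
    (0 < μ → 0 < α → 0 < σ_A 0 0 ∧ 0 < σ_A 1 1) := by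
  intro F_L σ_A
  have hc : (0:ℝ) < Real.cosh (2*α) := Real.cosh_pos (2*α)
  have hsq : (Real.sqrt (Real.cosh (2*α)))⁻¹ * (Real.sqrt (Real.cosh (2*α)))⁻¹
      = (Real.cosh (2*α))⁻¹ := by
    rw [← mul_inv, Real.mul_self_sqrt hc.le]
  have hpyth : Real.sinh (2*α) * Real.sinh (2*α) + 1
      = Real.cosh (2*α) * Real.cosh (2*α) := by
    have := Real.cosh_sq (2*α)
    nlinarith [this]
  have hmain : σ_A = !![μ * (Real.cosh (2*α) - 1), μ * Real.sinh (2*α);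
             μ * Real.sinh (2*α), μ * (Real.cosh (2*α) - 1)] := by
    show μ • (F_L * F_Lᵀ - 1) = _
    have hF : F_L = (Real.sqrt (Real.cosh (2*α)))⁻¹ •
        !![1, Real.sinh (2*α); 0, Real.cosh (2*α)] := rfl
    ext i j
    fin_cases i <;> fin_cases j <;>
      simp [hF, Matrix.mul_apply, Fin.sum_univ_two, Matrix.one_apply,
        Matrix.smul_apply, Matrix.transpose_apply, Matrix.vecHead, Matrix.vecTail, Matrix.vecMul, dotProduct] <;>
      field_simp <;>
      first
        | (left; rw [Real.sq_sqrt hc.le] <;> nlinarith [hpyth])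
        | nlinarith [hsq, hpyth, hc, Real.sq_sqrt hc.le, Real.sqrt_pos.mpr hc]
  refine ⟨hmain, fun hμ hα => ?_⟩
  have h1 : 1 < Real.cosh (2*α) := by
    have := Real.one_lt_cosh.mpr (by positivity : (2*α) ≠ 0)
    linarith
  rw [hmain]
  constructor <;> simp <;> nlinarith
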